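/- (Large girth estimate, third case) Let G be a finite simple cubic graph (every vertex has degree exactly 3) with first Betti number b ≥ 6 in which every cycle has length at least 4, and suppose S > 0 is a real number such that every finite simple graph with first Betti number at least b−5, equipped with any probability edge weighting, contains a cycle of weight at most S. Then for every probability edge weighting λ of G there exists a cycle C in G with λ(C) ≤ ((b−4)/(b−1))·S. -/

import Mathlib

set_option maxHeartbeats 1000000

attribute [local instance] Classical.propDecidable

open Finset SimpleGraph

private lemma fiber_card_aux {α β : Type} [Fintype α] [Fintype β] (f : α → β)
    (hf : Function.Surjective f) (y : β) (a₁ a₂ a₃ a₄ a₅ : α)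
    (h12 : a₁ ≠ a₂) (h13 : a₁ ≠ a₃) (h14 : a₁ ≠ a₄) (h15 : a₁ ≠ a₅)
    (h23 : a₂ ≠ a₃) (h24 : a₂ ≠ a₄) (h25 : a₂ ≠ a₅)
    (h34 : a₃ ≠ a₄) (h35 : a₃ ≠ a₅) (h45 : a₄ ≠ a₅)
    (g1 : f a₁ = y) (g2 : f a₂ = y) (g3 : f a₃ = y) (g4 : f a₄ = y) (g5 : f a₅ = y) :
    Fintype.card β + 4 ≤ Fintype.card α := by
  classical
  have hcard : Fintype.card α = ∑ b : β, (univ.filter fun a => f a = b).card :=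
    Finset.card_eq_sum_card_fiberwise (fun a _ => mem_univ (f a))
  have hy : 5 ≤ (univ.filter fun a => f a = y).card := by
    have hsub : ({a₁, a₂, a₃, a₄, a₅} : Finset α) ⊆ univ.filter fun a => f a = y := by
      intro a ha
      simp only [mem_insert, mem_singleton] at ha
      rcases ha with rfl | rfl | rfl | rfl | rfl <;> simp [g1, g2, g3, g4, g5]
    have h5 : ({a₁, a₂, a₃, a₄, a₅} : Finset α).card = 5 := by
      rw [card_insert_of_notMem (by simp [h12, h13, h14, h15]),
          card_insert_of_notMem (by simp [h23, h24, h25]),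
          card_insert_of_notMem (by simp [h34, h35]),
          card_insert_of_notMem (by simp [h45]), card_singleton]
    exact h5 ▸ card_le_card hsub
  have hrest : ∀ b : β, 1 ≤ (univ.filter fun a => f a = b).card := by
    intro b
    obtain ⟨a, rfl⟩ := hf b
    exact card_pos.mpr ⟨a, by simp⟩
  have hsum : ∑ b ∈ univ.erase y, (1:ℕ) ≤ ∑ b ∈ univ.erase y, (univ.filter fun a => f a = b).card :=
    Finset.sum_le_sum fun b _ => hrest b
  have h1 : (univ.erase y).card = Fintype.card β - 1 := by
    rw [card_erase_of_mem (mem_univ y), card_univ]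
  have h3 : 1 ≤ Fintype.card β := Fintype.card_pos_iff.mpr ⟨y⟩
  rw [hcard, ← Finset.add_sum_erase _ _ (mem_univ y)]
  simp only [Finset.sum_const, smul_eq_mul, mul_one] at hsum
  omega

private lemma reachable_isolated {V : Type} {G : SimpleGraph V} {u x : V}
    (h : ∀ w, ¬ G.Adj u w) (hr : G.Reachable u x) : u = x := by
  obtain ⟨p⟩ := hr
  cases p with
  | nil => rfl
  | cons h' _ => exact absurd h' (h _)

private lemma no_triangle_of_girth {V : Type} {G : SimpleGraph V}
    (hgirth : ∀ (x : V) (w : G.Walk x x), w.IsCycle → 4 ≤ w.length)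
    {a b c : V} (hab : G.Adj a b) (hbc : G.Adj b c) (hac : G.Adj a c) : False := by
  have hne1 : a ≠ b := hab.ne
  have hne2 : b ≠ c := hbc.ne
  have hne3 : a ≠ c := hac.ne
  let w : G.Walk a a := Walk.cons hab (Walk.cons hbc (Walk.cons hac.symm Walk.nil))
  have hcyc : w.IsCycle := by
    rw [Walk.isCycle_def]
    refine ⟨?_, by simp [w], ?_⟩
    · rw [Walk.isTrail_def]
      simp only [w, Walk.edges_cons, Walk.edges_nil, List.nodup_cons, List.mem_cons,
        List.not_mem_nil, or_false, List.mem_singleton, List.nodup_nil, and_true]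
      refine ⟨?_, ?_⟩
      · rintro (h | h) <;> rw [Sym2.eq_iff] at h <;> tauto
      · refine ⟨fun h => ?_, not_false⟩
        rw [Sym2.eq_iff] at h; tauto
    · simp only [w, Walk.support_cons, Walk.support_nil, List.tail_cons]
      simp [hne2, hne3, fun h => hne2 h, Ne.symm hne3]
      tauto
  have := hgirth a w hcyc
  simp [w] at this


/-- Large girth estimate, part (3) (Lemma 3.4 of the paper): if `G` is a cubic graph with
first Betti number `b ≥ 6` (encoded by `|E| + c = |V| + b`) in which every cycle has length
at least `4`, and if every graph of first Betti number at least `b − 5` with a probability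
edge weighting has a cycle of weight at most `S > 0`, then every probability edge weighting
of `G` admits a cycle of weight at most `((b−4)/(b−1))·S`. -/
theorem large_girth_estimate_three {V : Type} [Fintype V] (G : SimpleGraph V)
    (hcubic : ∀ v : V, G.degree v = 3)
    (b : ℕ) (hb : 6 ≤ b)
    (hbetti : G.edgeFinset.card + Nat.card G.ConnectedComponent = Fintype.card V + b)
    (hgirth : ∀ (x : V) (w : G.Walk x x), w.IsCycle → 4 ≤ w.length)
    (S : ℝ) (hSpos : 0 < S)
    (hsys : ∀ (V' : Type) [Fintype V'] (G' : SimpleGraph V') (b' : ℕ),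
      G'.edgeFinset.card + Nat.card G'.ConnectedComponent = Fintype.card V' + b' →
      b - 5 ≤ b' →
      ∀ lam' : Sym2 V' → ℝ, (∀ e ∈ G'.edgeFinset, 0 ≤ lam' e) →
        (∑ e ∈ G'.edgeFinset, lam' e = 1) →
        ∃ (x : V') (w : G'.Walk x x), w.IsCycle ∧ ∑ e ∈ w.edges.toFinset, lam' e ≤ S)
    (lam : Sym2 V → ℝ) (hnn : ∀ e ∈ G.edgeFinset, 0 ≤ lam e)
    (hsum : ∑ e ∈ G.edgeFinset, lam e = 1) :
    ∃ (x : V) (w : G.Walk x x), w.IsCycle ∧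
      ∑ e ∈ w.edges.toFinset, lam e ≤ (((b : ℝ) - 4) / ((b : ℝ) - 1)) * S := by
  classical
  have hTF : ∀ a b c : V, G.Adj a b → G.Adj b c → G.Adj a c → False :=
    fun _ _ _ h1 h2 h3 => no_triangle_of_girth hgirth h1 h2 h3
  set m := G.edgeFinset.card with hm
  set n := Fintype.card V with hn
  set c := Nat.card G.ConnectedComponent with hc
  -- handshake
  have h3n : 3 * n = 2 * m := by
    have h := G.sum_degrees_eq_twice_card_edges
    have : ∑ v : V, G.degree v = 3 * n := by
      rw [Finset.sum_congr rfl fun v _ => hcubic v]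
      simp [hn, mul_comm]
    omega
  -- V nonempty
  have hV : Nonempty V := by
    by_contra h
    rw [not_nonempty_iff] at h
    have hn0 : n = 0 := Fintype.card_eq_zero
    have hm0 : m = 0 := by
      rw [hm, Finset.card_eq_zero, Finset.eq_empty_iff_forall_notMem]
      intro e _
      exact (h.elim (Quot.out e).1)
    have hc0 : c = 0 := by
      rw [hc, Nat.card_eq_zero]
      left
      exact ⟨fun C => C.ind fun v => h.elim v⟩
    omega
  have hc1 : 1 ≤ c := by
    rw [hc]
    exact Nat.card_pos_iff.mpr ⟨⟨G.connectedComponentMk hV.some⟩, inferInstance⟩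
  -- closed neighborhoods
  set Nc : V → Finset V := fun v => insert v (G.neighborFinset v) with hNc
  have hmemNc : ∀ v x : V, x ∈ Nc v ↔ x = v ∨ G.Adj v x := by
    intro v x; simp [hNc, mem_neighborFinset]
  have hNcSymm : ∀ v x : V, x ∈ Nc v ↔ v ∈ Nc x := by
    intro v x; rw [hmemNc, hmemNc]
    constructor <;> (rintro (rfl | h); exacts [Or.inl rfl, Or.inr h.symm])
  have hNcCard : ∀ v : V, (Nc v).card = 4 := by
    intro v
    rw [hNc]
    rw [card_insert_of_notMem (G.notMem_neighborFinset_self v),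
      G.card_neighborFinset_eq_degree, hcubic]
  -- incidence predicate and weighted star
  set p : V → Sym2 V → Prop := fun v e => ∃ x, x ∈ e ∧ x ∈ Nc v with hp
  set Fv : V → Finset (Sym2 V) := fun v => G.edgeFinset.filter (p v) with hFv
  -- each edge is counted 6 times
  have hfiber : ∀ e ∈ G.edgeFinset, (univ.filter fun v => p v e).card = 6 := by
    intro e he
    induction e using Sym2.ind with
    | _ a b =>
      have hab : G.Adj a b := by rwa [mem_edgeFinset, mem_edgeSet] at he
      have hset : (univ.filter fun v => p v s(a, b)) = Nc a ∪ Nc b := by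
        ext v
        simp only [mem_filter, mem_univ, true_and, mem_union, hp, Sym2.mem_iff]
        constructor
        · rintro ⟨x, (rfl | rfl), hx⟩
          · exact Or.inl ((hNcSymm v x).mp hx)
          · exact Or.inr ((hNcSymm v x).mp hx)
        · rintro (h | h)
          · exact ⟨a, Or.inl rfl, (hNcSymm a v).mp h⟩
          · exact ⟨b, Or.inr rfl, (hNcSymm b v).mp h⟩
      have hinter : Nc a ∩ Nc b = {a, b} := by
        ext x
        simp only [mem_inter, mem_insert, mem_singleton]
        rw [hmemNc, hmemNc]
        constructor
        · rintro ⟨(rfl | h1), (rfl | h2)⟩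
          · exact Or.inl rfl
          · exact Or.inl rfl
          · exact Or.inr rfl
          · exact (hTF a b x hab h2 h1).elim
        · rintro (rfl | rfl)
          · exact ⟨Or.inl rfl, Or.inr hab.symm⟩
          · exact ⟨Or.inr hab, Or.inl rfl⟩
      have hcu := Finset.card_union_add_card_inter (Nc a) (Nc b)
      rw [hinter, hNcCard, hNcCard] at hcu
      have h2 : ({a, b} : Finset V).card = 2 := by
        rw [card_insert_of_notMem (by simp [hab.ne]), card_singleton]
      rw [hset]
      omega
  -- total weighted star count is 6
  have hsum6 : ∑ v : V, ∑ e ∈ Fv v, lam e = 6 := by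
    have step1 : ∀ v : V, ∑ e ∈ Fv v, lam e
        = ∑ e ∈ G.edgeFinset, if p v e then lam e else 0 := by
      intro v; rw [hFv]; exact Finset.sum_filter _ _
    calc ∑ v : V, ∑ e ∈ Fv v, lam e
        = ∑ v : V, ∑ e ∈ G.edgeFinset, if p v e then lam e else 0 :=
          Finset.sum_congr rfl fun v _ => step1 v
      _ = ∑ e ∈ G.edgeFinset, ∑ v : V, if p v e then lam e else 0 := Finset.sum_comm
      _ = ∑ e ∈ G.edgeFinset, 6 * lam e := by
          refine Finset.sum_congr rfl fun e he => ?_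
          rw [← Finset.sum_filter, Finset.sum_const, hfiber e he, nsmul_eq_mul]
          norm_num
      _ = 6 := by rw [← Finset.mul_sum, hsum, mul_one]
  -- choose the heaviest closed star
  have hnpos : (0:ℝ) < n := by
    have : 0 < n := Fintype.card_pos_iff.mpr hV
    exact_mod_cast this
  obtain ⟨v₀, -, hv₀⟩ : ∃ v₀ ∈ (univ : Finset V), 6 / (n:ℝ) ≤ ∑ e ∈ Fv v₀, lam e := by
    by_contra h'
    push_neg at h'
    have hlt : ∑ v : V, ∑ e ∈ Fv v, lam e < ∑ v : V, 6 / (n:ℝ) :=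
      Finset.sum_lt_sum_of_nonempty univ_nonempty fun v _ => h' v (mem_univ v)
    rw [hsum6, Finset.sum_const, nsmul_eq_mul, card_univ, ← hn,
      mul_div_cancel₀ _ (ne_of_gt hnpos)] at hlt
    exact lt_irrefl _ hlt
  -- the three neighbours of v₀
  have h3' : (G.neighborFinset v₀).card = 3 := by
    rw [G.card_neighborFinset_eq_degree, hcubic]
  rw [Finset.card_eq_three] at h3'
  obtain ⟨u₁, u₂, u₃, h12, h13, h23, hNeq⟩ := h3'
  have hu₁ : G.Adj v₀ u₁ := by
    rw [← mem_neighborFinset, hNeq]; simp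
  have hu₂ : G.Adj v₀ u₂ := by
    rw [← mem_neighborFinset, hNeq]; simp
  have hu₃ : G.Adj v₀ u₃ := by
    rw [← mem_neighborFinset, hNeq]; simp
  -- there is a vertex in the component of v₀ outside the closed neighbourhood
  obtain ⟨r, hrReach, hrNc⟩ : ∃ r : V, G.Reachable v₀ r ∧ r ∉ Nc v₀ := by
    by_contra h'
    push_neg at h'
    have hsub : G.neighborFinset u₁ ⊆ {v₀, u₂, u₃} := by
      intro w hw
      have hadj : G.Adj u₁ w := (mem_neighborFinset _ _ _).mp hw
      have hreach : G.Reachable v₀ w := ⟨Walk.cons hu₁ (Walk.cons hadj Walk.nil)⟩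
      have hwNc := (hmemNc v₀ w).mp (h' w hreach)
      have hwu₁ : w ≠ u₁ := fun h => G.irrefl (h ▸ hadj)
      rcases hwNc with rfl | hadj'
      · simp
      · have : w ∈ G.neighborFinset v₀ := (mem_neighborFinset _ _ _).mpr hadj'
        rw [hNeq] at this
        simp only [mem_insert, mem_singleton] at this
        rcases this with rfl | rfl | rfl
        · exact absurd rfl hwu₁
        · simp
        · simp
    have hcard3 : ({v₀, u₂, u₃} : Finset V).card ≤ 3 := by
      refine (card_insert_le _ _).trans ?_
      refine Nat.succ_le_succ ?_
      refine (card_insert_le _ _).trans ?_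
      simp
    have heq : G.neighborFinset u₁ = {v₀, u₂, u₃} := by
      refine Finset.eq_of_subset_of_card_le hsub ?_
      rw [G.card_neighborFinset_eq_degree, hcubic]
      exact hcard3
    have hadj12 : G.Adj u₁ u₂ := by
      rw [← mem_neighborFinset, heq]; simp
    exact hTF v₀ u₁ u₂ hu₁ hadj12 hu₂
  have hrv₀ : r ≠ v₀ := fun h => hrNc (by rw [h, hmemNc]; exact Or.inl rfl)
  have hru₁ : r ≠ u₁ := fun h => hrNc (by rw [h, hmemNc]; exact Or.inr hu₁)
  have hru₂ : r ≠ u₂ := fun h => hrNc (by rw [h, hmemNc]; exact Or.inr hu₂)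
  have hru₃ : r ≠ u₃ := fun h => hrNc (by rw [h, hmemNc]; exact Or.inr hu₃)
  have hv₀u₁ : v₀ ≠ u₁ := hu₁.ne
  have hv₀u₂ : v₀ ≠ u₂ := hu₂.ne
  have hv₀u₃ : v₀ ≠ u₃ := hu₃.ne
  -- five distinct vertices, so n ≥ 5 and m ≥ 9
  have hn5 : 5 ≤ n := by
    have hsub : ({v₀, u₁, u₂, u₃, r} : Finset V) ⊆ univ := subset_univ _
    have h5 : ({v₀, u₁, u₂, u₃, r} : Finset V).card = 5 := by
      rw [card_insert_of_notMem (by simp [hv₀u₁, hv₀u₂, hv₀u₃, hrv₀.symm]),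
          card_insert_of_notMem (by simp [h12, h13, hru₁.symm]),
          card_insert_of_notMem (by simp [h23, hru₂.symm]),
          card_insert_of_notMem (by simp [hru₃.symm]), card_singleton]
    calc 5 = _ := h5.symm
      _ ≤ univ.card := card_le_card hsub
      _ = n := card_univ
  have hm9 : 9 ≤ m := by omega
  -- the deleted star
  set F : Finset (Sym2 V) := Fv v₀ with hF
  have hFsubE : F ⊆ G.edgeFinset := by rw [hF, hFv]; exact filter_subset _ _
  set G' : SimpleGraph V := G.deleteEdges (F : Set (Sym2 V)) with hG'
  have hle : G' ≤ G := G.deleteEdges_le _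
  -- vertices of the closed star are isolated in G'
  have hiso : ∀ x ∈ Nc v₀, ∀ w, ¬ G'.Adj x w := by
    intro x hx w hadj
    rw [hG', deleteEdges_adj] at hadj
    obtain ⟨hGadj, hnot⟩ := hadj
    refine hnot ?_
    rw [mem_coe, hF, hFv]
    exact mem_filter.mpr ⟨mem_edgeFinset.mpr ((G.mem_edgeSet).mpr hGadj), ⟨x, by simp, hx⟩⟩
  have hE' : G'.edgeFinset = G.edgeFinset \ F := by
    convert G.edgeFinset_deleteEdges F
  have hmE' : G'.edgeFinset.card = m - F.card := by rw [hE', card_sdiff_of_subset hFsubE, hm]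
  -- the star has at most 9 edges
  have hIncCard : ∀ u : V, (G.incidenceFinset u).card = 3 := fun u => by
    rw [G.card_incidenceFinset_eq_degree, hcubic]
  have hsdiff : ∀ u : V, G.Adj v₀ u →
      (G.incidenceFinset u \ G.incidenceFinset v₀).card ≤ 2 := by
    intro u hu
    have hmem : s(v₀, u) ∈ G.incidenceFinset u := by
      rw [mem_incidenceFinset]
      exact ⟨(G.mem_edgeSet).mpr hu, by simp⟩
    have hmem' : s(v₀, u) ∈ G.incidenceFinset v₀ := by
      rw [mem_incidenceFinset]
      exact ⟨(G.mem_edgeSet).mpr hu, by simp⟩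
    have hsub2 : G.incidenceFinset u \ G.incidenceFinset v₀
        ⊆ G.incidenceFinset u \ {s(v₀, u)} := by
      intro e he
      rw [mem_sdiff] at he ⊢
      refine ⟨he.1, ?_⟩
      simp only [mem_singleton]
      rintro rfl
      exact he.2 hmem'
    calc (G.incidenceFinset u \ G.incidenceFinset v₀).card
        ≤ (G.incidenceFinset u \ {s(v₀, u)}).card := card_le_card hsub2
      _ = (G.incidenceFinset u).card - 1 := by
          rw [card_sdiff_of_subset (by simpa using hmem), card_singleton]
      _ ≤ 2 := by rw [hIncCard]
  have hFcard : F.card ≤ 9 := by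
    have hsubF : F ⊆ G.incidenceFinset v₀ ∪ ((G.incidenceFinset u₁ \ G.incidenceFinset v₀)
        ∪ ((G.incidenceFinset u₂ \ G.incidenceFinset v₀)
          ∪ (G.incidenceFinset u₃ \ G.incidenceFinset v₀))) := by
      intro e he
      rw [hF, hFv, mem_filter] at he
      obtain ⟨heE, x, hxe, hxNc⟩ := he
      by_cases hv : v₀ ∈ e
      · refine mem_union_left _ ?_
        rw [mem_incidenceFinset]
        exact ⟨mem_edgeFinset.mp heE, hv⟩
      · refine mem_union_right _ ?_
        rcases (hmemNc v₀ x).mp hxNc with rfl | hadj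
        · exact absurd hxe hv
        · have hxN : x ∈ G.neighborFinset v₀ := (mem_neighborFinset _ _ _).mpr hadj
          rw [hNeq] at hxN
          have hxInc : ∀ u, x = u → e ∈ G.incidenceFinset u \ G.incidenceFinset v₀ := by
            rintro u rfl
            rw [mem_sdiff, mem_incidenceFinset, mem_incidenceFinset]
            exact ⟨⟨mem_edgeFinset.mp heE, hxe⟩, fun h' => hv h'.2⟩
          simp only [mem_insert, mem_singleton] at hxN
          rcases hxN with rfl | rfl | rfl
          · exact mem_union_left _ (hxInc _ rfl)
          · exact mem_union_right _ (mem_union_left _ (hxInc _ rfl))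
          · exact mem_union_right _ (mem_union_right _ (hxInc _ rfl))
    have c1 := card_union_le (G.incidenceFinset v₀) ((G.incidenceFinset u₁ \ G.incidenceFinset v₀)
        ∪ ((G.incidenceFinset u₂ \ G.incidenceFinset v₀)
          ∪ (G.incidenceFinset u₃ \ G.incidenceFinset v₀)))
    have c2 := card_union_le (G.incidenceFinset u₁ \ G.incidenceFinset v₀)
        ((G.incidenceFinset u₂ \ G.incidenceFinset v₀)
          ∪ (G.incidenceFinset u₃ \ G.incidenceFinset v₀))
    have c3 := card_union_le (G.incidenceFinset u₂ \ G.incidenceFinset v₀)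
        (G.incidenceFinset u₃ \ G.incidenceFinset v₀)
    have hc0 := hIncCard v₀
    have hd1 := hsdiff u₁ hu₁
    have hd2 := hsdiff u₂ hu₂
    have hd3 := hsdiff u₃ hu₃
    have := card_le_card hsubF
    omega
  -- components of G'
  have finCC : Fintype G.ConnectedComponent := Fintype.ofFinite _
  have finCC' : Fintype G'.ConnectedComponent := Fintype.ofFinite _
  set φ : G'.ConnectedComponent → G.ConnectedComponent :=
    ConnectedComponent.map (Hom.ofLE hle) with hφ
  have hφmk : ∀ x : V, φ (G'.connectedComponentMk x) = G.connectedComponentMk x := by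
    intro x; rw [hφ, ConnectedComponent.map_mk]; rfl
  have hφsurj : Function.Surjective φ := fun C =>
    ConnectedComponent.ind (fun v => ⟨G'.connectedComponentMk v, hφmk v⟩) C
  have hisoCC : ∀ x, x ∈ Nc v₀ → ∀ y : V,
      G'.connectedComponentMk x = G'.connectedComponentMk y → x = y := by
    intro x hx y h
    exact reachable_isolated (hiso x hx) (ConnectedComponent.eq.mp h)
  have hvNc : v₀ ∈ Nc v₀ := (hmemNc _ _).mpr (Or.inl rfl)
  have hu₁Nc : u₁ ∈ Nc v₀ := (hmemNc _ _).mpr (Or.inr hu₁)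
  have hu₂Nc : u₂ ∈ Nc v₀ := (hmemNc _ _).mpr (Or.inr hu₂)
  have hu₃Nc : u₃ ∈ Nc v₀ := (hmemNc _ _).mpr (Or.inr hu₃)
  have hreachNc : ∀ x ∈ Nc v₀, G.Reachable x v₀ := by
    intro x hx
    rcases (hmemNc v₀ x).mp hx with rfl | h
    · exact Reachable.refl x
    · exact h.symm.reachable
  have hc'4 : c + 4 ≤ Nat.card G'.ConnectedComponent := by
    have key := fiber_card_aux φ hφsurj (G.connectedComponentMk v₀)
      (G'.connectedComponentMk v₀) (G'.connectedComponentMk u₁) (G'.connectedComponentMk u₂)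
      (G'.connectedComponentMk u₃) (G'.connectedComponentMk r)
      (fun h => hv₀u₁ (hisoCC _ hvNc _ h)) (fun h => hv₀u₂ (hisoCC _ hvNc _ h))
      (fun h => hv₀u₃ (hisoCC _ hvNc _ h)) (fun h => hrv₀ (hisoCC _ hvNc _ h).symm)
      (fun h => h12 (hisoCC _ hu₁Nc _ h)) (fun h => h13 (hisoCC _ hu₁Nc _ h))
      (fun h => hru₁ (hisoCC _ hu₁Nc _ h).symm) (fun h => h23 (hisoCC _ hu₂Nc _ h))
      (fun h => hru₂ (hisoCC _ hu₂Nc _ h).symm) (fun h => hru₃ (hisoCC _ hu₃Nc _ h).symm)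
      (hφmk v₀)
      (by rw [hφmk]; exact ConnectedComponent.sound (hreachNc _ hu₁Nc))
      (by rw [hφmk]; exact ConnectedComponent.sound (hreachNc _ hu₂Nc))
      (by rw [hφmk]; exact ConnectedComponent.sound (hreachNc _ hu₃Nc))
      (by rw [hφmk]; exact ConnectedComponent.sound hrReach.symm)
    rw [hc, Nat.card_eq_fintype_card, Nat.card_eq_fintype_card]
    omega
  have hc'n : Nat.card G'.ConnectedComponent ≤ n := by
    have hs : Function.Surjective (G'.connectedComponentMk) := fun C =>
      ConnectedComponent.ind (fun v => ⟨v, rfl⟩) C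
    have := Nat.card_le_card_of_surjective _ hs
    rwa [Nat.card_eq_fintype_card (α := V), ← hn] at this
  -- the new Betti number
  set c' : ℕ := Nat.card G'.ConnectedComponent with hc'
  set b' : ℕ := G'.edgeFinset.card + c' - n with hb'def
  have hbetti' : G'.edgeFinset.card + c' = n + b' := by omega
  have hb'ge : b - 5 ≤ b' := by omega
  have hE'pos : 1 ≤ G'.edgeFinset.card := by omega
  -- weights
  set W : ℝ := ∑ e ∈ F, lam e with hW
  set T : ℝ := ∑ e ∈ G.edgeFinset \ F, lam e with hT
  have hTW : T + W = 1 := by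
    rw [hT, hW, Finset.sum_sdiff hFsubE, hsum]
  have hbR : (6:ℝ) ≤ (b:ℝ) := by exact_mod_cast hb
  have hb1pos : (0:ℝ) < (b:ℝ) - 1 := by linarith
  have hWlow : 3 / ((b:ℝ) - 1) ≤ W := by
    have h1 : 6 / (n:ℝ) ≤ W := by
      rw [hW, hF]; exact hv₀
    have hn2b : (n:ℝ) ≤ 2 * ((b:ℝ) - 1) := by
      have : n + 2 * c = 2 * b := by omega
      have hcast : (n:ℝ) + 2 * (c:ℝ) = 2 * (b:ℝ) := by exact_mod_cast this
      have hcR : (1:ℝ) ≤ (c:ℝ) := by exact_mod_cast hc1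
      linarith
    have h2 : 6 / (2 * ((b:ℝ) - 1)) ≤ 6 / (n:ℝ) :=
      div_le_div_of_nonneg_left (by norm_num) hnpos hn2b
    have h3 : 6 / (2 * ((b:ℝ) - 1)) = 3 / ((b:ℝ) - 1) := by
      rw [show (6:ℝ) = 2 * 3 by norm_num, mul_div_mul_left _ _ (by norm_num : (2:ℝ) ≠ 0)]
    linarith
  have hTup : T ≤ ((b:ℝ) - 4) / ((b:ℝ) - 1) := by
    have : ((b:ℝ) - 4) / ((b:ℝ) - 1) = 1 - 3 / ((b:ℝ) - 1) := by
      field_simp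
      ring
    rw [this]
    linarith
  have hTnn : 0 ≤ T := by
    rw [hT]
    exact Finset.sum_nonneg fun e he => hnn e (mem_sdiff.mp he).1
  have hRHSnn : 0 ≤ (((b:ℝ) - 4) / ((b:ℝ) - 1)) * S :=
    mul_nonneg (div_nonneg (by linarith) hb1pos.le) hSpos.le
  -- transfer machinery
  have htransfer : ∀ (x : V) (w' : G'.Walk x x), w'.IsCycle →
      ∃ w : G.Walk x x, w.IsCycle ∧ w.edges = w'.edges := by
    intro x w' hcyc
    have hedges : ∀ e ∈ w'.edges, e ∈ G.edgeSet := fun e he =>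
      edgeSet_mono hle (w'.edges_subset_edgeSet he)
    exact ⟨w'.transfer G hedges, hcyc.transfer _, w'.edges_transfer _⟩
  have hedgeMem : ∀ (x : V) (w' : G'.Walk x x), ∀ e ∈ w'.edges.toFinset,
      e ∈ G.edgeFinset \ F := by
    intro x w' e he
    rw [List.mem_toFinset] at he
    rw [← hE']
    exact mem_edgeFinset.mpr (w'.edges_subset_edgeSet he)
  rcases hTnn.eq_or_lt with hT0 | hTpos
  · -- all remaining weight is zero: any cycle of G' works
    have hsum0 : ∑ e ∈ G.edgeFinset \ F, lam e = 0 := by rw [← hT]; exact hT0.symm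
    have hzero : ∀ e ∈ G.edgeFinset \ F, lam e = 0 :=
      (Finset.sum_eq_zero_iff_of_nonneg (fun e he => hnn e (mem_sdiff.mp he).1)).mp hsum0
    have hcpos : (0:ℝ) < (G'.edgeFinset.card : ℝ) := by
      exact_mod_cast Nat.lt_of_lt_of_le Nat.zero_lt_one hE'pos
    obtain ⟨x, w', hcyc, -⟩ := hsys V G' b' (by convert hbetti') hb'ge
      (fun _ => ((G'.edgeFinset.card : ℝ))⁻¹)
      (fun e _ => inv_nonneg.mpr hcpos.le)
      (by rw [Finset.sum_congr (s₂ := G.edgeFinset \ F) (by convert hE') (fun _ _ => rfl), ← hE', Finset.sum_const, nsmul_eq_mul, mul_inv_cancel₀ hcpos.ne'])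
    obtain ⟨w, hwcyc, hwe⟩ := htransfer x w' hcyc
    refine ⟨x, w, hwcyc, ?_⟩
    rw [hwe]
    have : ∑ e ∈ w'.edges.toFinset, lam e = 0 :=
      Finset.sum_eq_zero fun e he => hzero e (hedgeMem x w' e he)
    rw [this]
    exact hRHSnn
  · -- renormalise the weights outside the star
    obtain ⟨x, w', hcyc, hwt⟩ := hsys V G' b' (by convert hbetti') hb'ge
      (fun e => lam e / T)
      (fun e he => by
        replace he : e ∈ G.edgeFinset \ F := by rw [← hE']; convert he
        exact div_nonneg (hnn e (mem_sdiff.mp he).1) hTnn)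
      (by
        rw [Finset.sum_congr (s₂ := G.edgeFinset \ F) (by convert hE') (fun _ _ => rfl), ← Finset.sum_div, ← hT, div_self hTpos.ne'])
    obtain ⟨w, hwcyc, hwe⟩ := htransfer x w' hcyc
    refine ⟨x, w, hwcyc, ?_⟩
    rw [hwe]
    rw [← Finset.sum_div, div_le_iff₀ hTpos] at hwt
    calc ∑ e ∈ w'.edges.toFinset, lam e ≤ S * T := hwt
      _ = T * S := mul_comm _ _
      _ ≤ (((b:ℝ) - 4) / ((b:ℝ) - 1)) * S :=
          mul_le_mul_of_nonneg_right hTup hSpos.le
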